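/- Let K be a field with char K ≠ 2 and char K ≠ 3, let (V, c) be a braided vector space over K such that c is of Hecke type of mark 1 (i.e. c² = id_{V⊗V}), and let b be a c-bracket on (V, c). If the canonical K-linear map ι_{c,b} : V → U(V, c, b) (formed with λ = 1) is injective, then b ∘ c = −b and b ∘ b₁ ∘ (id_{V⊗V⊗V} − c₂ + c₂ ∘ c₁) = 0; that is, (V, c, b) is a generalized Lie algebra in the sense of Gurevich. -/

import Mathlib

open TensorProduct

noncomputable section

variable {K : Type*} [Field K] {V : Type*} [AddCommGroup V] [Module K V]

/-- The endomorphism `c ⊗ id_V` of `V ⊗ (V ⊗ V)` (transported along associativity). -/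
def opC1 (c : V ⊗[K] V →ₗ[K] V ⊗[K] V) :
    V ⊗[K] (V ⊗[K] V) →ₗ[K] V ⊗[K] (V ⊗[K] V) :=
  (TensorProduct.assoc K V V V).toLinearMap ∘ₗ
    LinearMap.rTensor V c ∘ₗ (TensorProduct.assoc K V V V).symm.toLinearMap

/-- The endomorphism `id_V ⊗ c` of `V ⊗ (V ⊗ V)`. -/
def opC2 (c : V ⊗[K] V →ₗ[K] V ⊗[K] V) :
    V ⊗[K] (V ⊗[K] V) →ₗ[K] V ⊗[K] (V ⊗[K] V) :=
  LinearMap.lTensor V c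

/-- The map `b ⊗ id_V : V ⊗ (V ⊗ V) → V ⊗ V`. -/
def opB1 (b : V ⊗[K] V →ₗ[K] V) :
    V ⊗[K] (V ⊗[K] V) →ₗ[K] V ⊗[K] V :=
  LinearMap.rTensor V b ∘ₗ (TensorProduct.assoc K V V V).symm.toLinearMap

/-- The map `id_V ⊗ b : V ⊗ (V ⊗ V) → V ⊗ V`. -/
def opB2 (b : V ⊗[K] V →ₗ[K] V) :
    V ⊗[K] (V ⊗[K] V) →ₗ[K] V ⊗[K] V :=
  LinearMap.lTensor V b

/-- The braid equation `c₁ ∘ c₂ ∘ c₁ = c₂ ∘ c₁ ∘ c₂`. -/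
def BraidEq (c : V ⊗[K] V →ₗ[K] V ⊗[K] V) : Prop :=
  opC1 c ∘ₗ opC2 c ∘ₗ opC1 c = opC2 c ∘ₗ opC1 c ∘ₗ opC2 c

/-- `c` is of Hecke type of mark `lam`: `(c + id) ∘ (c - lam • id) = 0`. -/
def IsHecke (lam : K) (c : V ⊗[K] V →ₗ[K] V ⊗[K] V) : Prop :=
  (c + LinearMap.id) ∘ₗ (c - lam • LinearMap.id) = 0

/-- `b` is a `c`-bracket: `c ∘ b₁ = b₂ ∘ c₁ ∘ c₂` and `c ∘ b₂ = b₁ ∘ c₂ ∘ c₁`. -/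
def IsBracket (c : V ⊗[K] V →ₗ[K] V ⊗[K] V) (b : V ⊗[K] V →ₗ[K] V) : Prop :=
  c ∘ₗ opB1 b = opB2 b ∘ₗ opC1 c ∘ₗ opC2 c ∧
  c ∘ₗ opB2 b = opB1 b ∘ₗ opC2 c ∘ₗ opC1 c

/-- The linear map `V ⊗ V → T(V)`, `v ⊗ w ↦ ι v * ι w`. -/
def tensMul : V ⊗[K] V →ₗ[K] TensorAlgebra K V :=
  LinearMap.mul' K (TensorAlgebra K V) ∘ₗ
    TensorProduct.map (TensorAlgebra.ι K) (TensorAlgebra.ι K)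

/-- The relation on `T(V)` whose associated ring quotient is
`U(V,c,b) = T(V)/(c(z) - lam•z - b(z) : z ∈ V ⊗ V)`. -/
def envRel (lam : K) (c : V ⊗[K] V →ₗ[K] V ⊗[K] V) (b : V ⊗[K] V →ₗ[K] V) :
    TensorAlgebra K V → TensorAlgebra K V → Prop :=
  fun x y => ∃ z : V ⊗[K] V,
    x = tensMul (c z) ∧ y = lam • tensMul z + TensorAlgebra.ι K (b z)

/-- The canonical map `ι_{c,b} : V → U(V,c,b)`. -/
def envIota (lam : K) (c : V ⊗[K] V →ₗ[K] V ⊗[K] V) (b : V ⊗[K] V →ₗ[K] V) :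
    V →ₗ[K] RingQuot (envRel lam c b) :=
  (RingQuot.mkAlgHom K (envRel lam c b)).toLinearMap ∘ₗ TensorAlgebra.ι K

/-- The q-integer `(n)_lam = 1 + lam + ⋯ + lam^(n-1)`. -/
def qInt (lam : K) (n : ℕ) : K := ∑ i ∈ Finset.range n, lam ^ i

/-- The q-factorial `(n)!_lam = (1)_lam (2)_lam ⋯ (n)_lam`. -/
def qFac (lam : K) (n : ℕ) : K := ∏ i ∈ Finset.range n, qInt lam (i + 1)


section Aux

variable (c : V ⊗[K] V →ₗ[K] V ⊗[K] V) (b : V ⊗[K] V →ₗ[K] V)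

/-- degree-2 multiplication into the enveloping algebra -/
def mu2 : V ⊗[K] V →ₗ[K] RingQuot (envRel (1 : K) c b) :=
  (RingQuot.mkAlgHom K (envRel (1 : K) c b)).toLinearMap ∘ₗ tensMul

/-- degree-3 multiplication into the enveloping algebra -/
def mu3 : V ⊗[K] (V ⊗[K] V) →ₗ[K] RingQuot (envRel (1 : K) c b) :=
  LinearMap.mul' K _ ∘ₗ TensorProduct.map (envIota (1 : K) c b) (mu2 c b)

lemma mu2_tmul (v w : V) :
    mu2 c b (v ⊗ₜ w) = envIota (1 : K) c b v * envIota (1 : K) c b w := by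
  simp [mu2, tensMul, envIota, LinearMap.mul'_apply, map_mul]

/-- the defining relation of the enveloping algebra, as linear maps -/
lemma rel2 : mu2 c b ∘ₗ c = mu2 c b + envIota (1 : K) c b ∘ₗ b := by
  refine LinearMap.ext fun z => ?_
  have hrel : envRel (1 : K) c b (tensMul (c z))
      ((1:K) • tensMul z + TensorAlgebra.ι K (b z)) := ⟨z, rfl, rfl⟩
  have h := RingQuot.mkAlgHom_rel K hrel
  simp only [one_smul, map_add] at h
  simpa [mu2, envIota] using h

lemma rel2' : mu2 c b ∘ₗ c = mu2 c b + envIota (1 : K) c b ∘ₗ b := rel2 c b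

/-- `μ₃ ∘ assoc = mul ∘ (μ₂ ⊗ μ₁)` -/
lemma mu3_assoc :
    mu3 c b ∘ₗ (TensorProduct.assoc K V V V).toLinearMap =
      LinearMap.mul' K _ ∘ₗ TensorProduct.map (mu2 c b) (envIota (1 : K) c b) := by
  apply TensorProduct.ext_threefold
  intro x y z
  simp [mu3, mu2_tmul, LinearMap.mul'_apply, mul_assoc]

lemma rel3_2 : mu3 c b ∘ₗ opC2 c = mu3 c b + mu2 c b ∘ₗ opB2 b := by
  refine TensorProduct.ext' fun x z => ?_
  have h := LinearMap.congr_fun (rel2 c b) z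
  simp only [LinearMap.comp_apply, LinearMap.add_apply] at h
  simp [mu3, opC2, opB2, LinearMap.mul'_apply, h, mul_add, mu2_tmul]

lemma rel3_1 : mu3 c b ∘ₗ opC1 c = mu3 c b + mu2 c b ∘ₗ opB1 b := by
  rw [← LinearMap.cancel_right (g := (TensorProduct.assoc K V V V).toLinearMap)
    (TensorProduct.assoc K V V V).surjective]
  apply TensorProduct.ext_threefold
  intro x y z
  have h := LinearMap.congr_fun (rel2 c b) (x ⊗ₜ[K] y)
  simp only [LinearMap.comp_apply, LinearMap.add_apply] at h
  have hassoc := LinearMap.congr_fun (mu3_assoc c b)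
  simp only [LinearMap.comp_apply, LinearEquiv.coe_coe] at hassoc
  simp only [LinearMap.add_apply, LinearMap.comp_apply, opC1, opB1,
    LinearEquiv.coe_coe, TensorProduct.assoc_tmul,
    TensorProduct.assoc_symm_tmul, LinearMap.rTensor_tmul]
  rw [hassoc (c (x ⊗ₜ y) ⊗ₜ z)]
  simp [mu3, LinearMap.mul'_apply, h, add_mul, mu2_tmul, mul_assoc]

end Aux

/-- **Theorem (mark 1 case).**  If `char K ≠ 2, 3`, `(V,c)` is a braided vector space of
Hecke type of mark `1` (i.e. `c² = id`), `b` is a `c`-bracket, and the canonical map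
`ι_{c,b} : V → U(V,c,b)` (formed with `lam = 1`) is injective, then `b ∘ c = -b` and
`b ∘ b₁ ∘ (id - c₂ + c₂ ∘ c₁) = 0`, i.e. `(V,c,b)` is a generalized Lie algebra. -/
theorem generalized_lie_of_envIota_injective_mark_one
    (hchar2 : ringChar K ≠ 2) (hchar3 : ringChar K ≠ 3)
    (c : V ⊗[K] V →ₗ[K] V ⊗[K] V) (hbraid : BraidEq c) (hHecke : IsHecke (1 : K) c)
    (b : V ⊗[K] V →ₗ[K] V) (hb : IsBracket c b)
    (hinj : Function.Injective (envIota (1 : K) c b)) :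
    b ∘ₗ c = -b ∧
    b ∘ₗ opB1 b ∘ₗ (LinearMap.id - opC2 c + opC2 c ∘ₗ opC1 c) = 0 := by
  classical
  set μ₁ := envIota (1 : K) c b with hμ₁
  -- injectivity at the level of maps
  have hzero : ∀ x : V, μ₁ x = 0 → x = 0 := fun x hx =>
    hinj (by simpa using hx)
  have hker : ∀ (f : V ⊗[K] (V ⊗[K] V) →ₗ[K] V), μ₁ ∘ₗ f = 0 → f = 0 := by
    intro f hf
    refine LinearMap.ext fun w => ?_
    exact hzero _ (by simpa using LinearMap.congr_fun hf w)
  have hker2 : ∀ (f : V ⊗[K] V →ₗ[K] V), μ₁ ∘ₗ f = 0 → f = 0 := by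
    intro f hf
    refine LinearMap.ext fun w => ?_
    exact hzero _ (by simpa using LinearMap.congr_fun hf w)
  -- c ∘ c = id
  have hcc : c ∘ₗ c = LinearMap.id := by
    refine LinearMap.ext fun z => ?_
    have h := LinearMap.congr_fun hHecke z
    simp only [LinearMap.comp_apply, LinearMap.add_apply, LinearMap.sub_apply,
      LinearMap.smul_apply, LinearMap.id_apply, one_smul, LinearMap.zero_apply,
      map_sub] at h
    have h2 : c (c z) - z = 0 := by rw [← h]; abel
    simpa [sub_eq_zero] using h2
  -- Part 1 : b ∘ c = -b
  have hbc : b ∘ₗ c = -b := by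
    have h2 := congrArg (fun f => f ∘ₗ c) (rel2 c b)
    simp only [LinearMap.add_comp] at h2
    rw [LinearMap.comp_assoc, hcc, LinearMap.comp_id, rel2 c b,
      LinearMap.comp_assoc] at h2
    -- h2 : mu2 = (mu2 + μ₁ ∘ₗ b) + μ₁ ∘ₗ (b ∘ₗ c)
    have : IsLeftCancelAdd (V ⊗[K] V →ₗ[K] RingQuot (envRel (1:K) c b)) :=
      ⟨fun a b d h => LinearMap.ext fun x => add_left_cancel (by simpa only [LinearMap.add_apply] using LinearMap.congr_fun h x)⟩
    rw [add_assoc, left_eq_add, ← LinearMap.comp_add] at h2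
    have h3 := hker2 _ h2
    have h4 : b ∘ₗ c = -b := by
      have := congrArg (fun f => f - b) h3
      simpa [add_sub_cancel_left, sub_eq_iff_eq_add] using
        eq_neg_of_add_eq_zero_right h3
    exact h4
  -- abbreviations
  have e1 : ∀ X : V ⊗[K] (V ⊗[K] V) →ₗ[K] V ⊗[K] (V ⊗[K] V),
      mu3 c b ∘ₗ (opC1 c ∘ₗ X) = mu3 c b ∘ₗ X + (mu2 c b ∘ₗ opB1 b) ∘ₗ X := by
    intro X
    rw [← LinearMap.comp_assoc, rel3_1, LinearMap.add_comp, LinearMap.comp_assoc]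
  have e2 : ∀ X : V ⊗[K] (V ⊗[K] V) →ₗ[K] V ⊗[K] (V ⊗[K] V),
      mu3 c b ∘ₗ (opC2 c ∘ₗ X) = mu3 c b ∘ₗ X + (mu2 c b ∘ₗ opB2 b) ∘ₗ X := by
    intro X
    rw [← LinearMap.comp_assoc, rel3_2, LinearMap.add_comp, LinearMap.comp_assoc]
  -- the two sides of the braid relation
  have hL : mu3 c b ∘ₗ (opC1 c ∘ₗ opC2 c ∘ₗ opC1 c) =
      mu3 c b + mu2 c b ∘ₗ opB1 b + (mu2 c b ∘ₗ opB2 b) ∘ₗ opC1 c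
        + (mu2 c b ∘ₗ opB1 b) ∘ₗ (opC2 c ∘ₗ opC1 c) := by
    rw [e1 (opC2 c ∘ₗ opC1 c), e2 (opC1 c), rel3_1]
  have hR : mu3 c b ∘ₗ (opC2 c ∘ₗ opC1 c ∘ₗ opC2 c) =
      mu3 c b + mu2 c b ∘ₗ opB2 b + (mu2 c b ∘ₗ opB1 b) ∘ₗ opC2 c
        + (mu2 c b ∘ₗ opB2 b) ∘ₗ (opC1 c ∘ₗ opC2 c) := by
    rw [e2 (opC1 c ∘ₗ opC2 c), e1 (opC2 c), rel3_2]
  -- reduce the two "double" terms with the bracket axioms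
  have hA1cc : (mu2 c b ∘ₗ opB1 b) ∘ₗ (opC2 c ∘ₗ opC1 c) =
      mu2 c b ∘ₗ opB2 b + μ₁ ∘ₗ (b ∘ₗ opB2 b) := by
    rw [LinearMap.comp_assoc, ← hb.2, ← LinearMap.comp_assoc, rel2 c b,
      LinearMap.add_comp, LinearMap.comp_assoc]
  have hA2cc : (mu2 c b ∘ₗ opB2 b) ∘ₗ (opC1 c ∘ₗ opC2 c) =
      mu2 c b ∘ₗ opB1 b + μ₁ ∘ₗ (b ∘ₗ opB1 b) := by
    rw [LinearMap.comp_assoc, ← hb.1, ← LinearMap.comp_assoc, rel2 c b,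
      LinearMap.add_comp, LinearMap.comp_assoc]
  have hbig : mu3 c b + mu2 c b ∘ₗ opB1 b + (mu2 c b ∘ₗ opB2 b) ∘ₗ opC1 c
        + (mu2 c b ∘ₗ opB2 b + μ₁ ∘ₗ (b ∘ₗ opB2 b)) =
      mu3 c b + mu2 c b ∘ₗ opB2 b + (mu2 c b ∘ₗ opB1 b) ∘ₗ opC2 c
        + (mu2 c b ∘ₗ opB1 b + μ₁ ∘ₗ (b ∘ₗ opB1 b)) := by
    rw [← hA1cc, ← hA2cc, ← hL, ← hR]
    unfold BraidEq at hbraid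
    rw [hbraid]
  have hstar : (mu2 c b ∘ₗ opB2 b) ∘ₗ opC1 c + μ₁ ∘ₗ (b ∘ₗ opB2 b) =
      (mu2 c b ∘ₗ opB1 b) ∘ₗ opC2 c + μ₁ ∘ₗ (b ∘ₗ opB1 b) := by
    have h' : (mu3 c b + mu2 c b ∘ₗ opB1 b + mu2 c b ∘ₗ opB2 b)
          + ((mu2 c b ∘ₗ opB2 b) ∘ₗ opC1 c + μ₁ ∘ₗ (b ∘ₗ opB2 b)) =
        (mu3 c b + mu2 c b ∘ₗ opB1 b + mu2 c b ∘ₗ opB2 b)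
          + ((mu2 c b ∘ₗ opB1 b) ∘ₗ opC2 c + μ₁ ∘ₗ (b ∘ₗ opB1 b)) := by
      abel_nf
      abel_nf at hbig
      rw [add_left_comm ((mu2 c b ∘ₗ opB2 b) ∘ₗ opC1 c)] at hbig
      exact hbig
    have : IsLeftCancelAdd (V ⊗[K] (V ⊗[K] V) →ₗ[K] RingQuot (envRel (1:K) c b)) :=
      ⟨fun a b d h => LinearMap.ext fun x => add_left_cancel (by simpa only [LinearMap.add_apply] using LinearMap.congr_fun h x)⟩
    exact add_left_cancel h'
  -- compose hstar with opC2 c on the right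
  have hC2C2 : opC2 c ∘ₗ opC2 c = LinearMap.id := by
    rw [opC2, ← LinearMap.lTensor_comp, hcc, LinearMap.lTensor_id]
  have hB2C2 : opB2 b ∘ₗ opC2 c = -opB2 b := by
    rw [opB2, opC2, ← LinearMap.lTensor_comp, hbc, LinearMap.lTensor_neg]
  have hstar2 := congrArg (fun f => f ∘ₗ opC2 c) hstar
  simp only [LinearMap.add_comp] at hstar2
  rw [LinearMap.comp_assoc (opC2 c) (opC1 c) _ ] at hstar2
  -- now (mu2∘B2)∘(C1∘C2) term
  rw [hA2cc] at hstar2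
  rw [LinearMap.comp_assoc (opC2 c) (b ∘ₗ opB2 b) μ₁] at hstar2
  rw [LinearMap.comp_assoc (opC2 c) (opB2 b) b, hB2C2, LinearMap.comp_neg,
    LinearMap.comp_neg,
    LinearMap.comp_assoc (opC2 c) (opC2 c) (mu2 c b ∘ₗ opB1 b), hC2C2,
    LinearMap.comp_id,
    LinearMap.comp_assoc (opC2 c) (b ∘ₗ opB1 b) μ₁,
    LinearMap.comp_assoc (opC2 c) (opB1 b) b] at hstar2
  -- hstar2 : mu2∘B1 + μ₁∘(b∘B1) + -(μ₁∘(b∘B2)) = mu2∘B1 + μ₁∘(b∘(B1∘C2))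
  have hzero3 : μ₁ ∘ₗ (b ∘ₗ opB1 b - b ∘ₗ opB2 b - b ∘ₗ (opB1 b ∘ₗ opC2 c)) = 0 := by
    have h0 := sub_eq_zero_of_eq hstar2
    simp only [LinearMap.comp_sub]
    rw [← h0]
    abel
  have hJ := hker _ hzero3
  refine ⟨hbc, ?_⟩
  rw [LinearMap.comp_add, LinearMap.comp_sub, LinearMap.comp_id, ← hb.2,
    LinearMap.comp_add, LinearMap.comp_sub,
    ← LinearMap.comp_assoc (opB2 b) c b, hbc, LinearMap.neg_comp]
  rw [← hJ]
  abel

end
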